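/- Define h(z) = e^{iπz} · sin(πz) / ( cos((π/2)√z) · cos((π/2)√(−z)) ), where √ is the principal complex square root. Then there exist positive constants C₁, C₂ such that |h(x+iy)| ≤ C₁ e^{−C₂√y} / (1+x²) for all x ∈ ℝ and y ≥ 0, and |h(x+iy)| ≤ C₁ e^{2π|y| − C₂√|y|} / (1+x²) for all x ∈ ℝ and y < 0. -/

import Mathlib

noncomputable section

/-- The principal complex square root, `√z = z^{1/2}` (principal branch, `Re √z ≥ 0`). -/
def csqrt (z : ℂ) : ℂ := z ^ ((1:ℂ) / 2)

/-- The function `h(z) = e^{iπz} sin(πz) / (cos((π/2)√z) cos((π/2)√(-z)))` of the paper. -/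
def hFun (z : ℂ) : ℂ :=
  Complex.exp (Complex.I * Real.pi * z) * Complex.sin (Real.pi * z) /
    (Complex.cos ((Real.pi / 2 : ℝ) * csqrt z) * Complex.cos ((Real.pi / 2 : ℝ) * csqrt (-z)))

open Real

lemma absSq_sin (ζ : ℂ) : (‖Complex.sin ζ‖)^2
    = Real.sin ζ.re^2 + Real.sinh ζ.im^2 := by
  rw [Complex.sq_norm, Complex.sin_eq]
  have h1 : Complex.sin ζ.re = (Real.sin ζ.re : ℂ) := (Complex.ofReal_sin _).symm
  have h2 : Complex.cos ζ.re = (Real.cos ζ.re : ℂ) := (Complex.ofReal_cos _).symm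
  have h3 : Complex.cosh ζ.im = (Real.cosh ζ.im : ℂ) := (Complex.ofReal_cosh _).symm
  have h4 : Complex.sinh ζ.im = (Real.sinh ζ.im : ℂ) := (Complex.ofReal_sinh _).symm
  rw [h1, h2, h3, h4]
  rw [show ((Real.sin ζ.re :ℂ) * (Real.cosh ζ.im:ℂ) + (Real.cos ζ.re:ℂ) * (Real.sinh ζ.im:ℂ) * Complex.I)
    = Complex.mk (Real.sin ζ.re * Real.cosh ζ.im) (Real.cos ζ.re * Real.sinh ζ.im) by
      apply Complex.ext <;> simp [Complex.add_re, Complex.add_im, Complex.mul_re, Complex.mul_im, Complex.sub_re, Complex.sub_im, Complex.sin_ofReal_re, Complex.sin_ofReal_im, Complex.cos_ofReal_re, Complex.cos_ofReal_im, Complex.sinh_ofReal_re, Complex.sinh_ofReal_im, Complex.cosh_ofReal_re, Complex.cosh_ofReal_im]]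
  rw [Complex.normSq_mk]
  have := Real.cosh_sq ζ.im
  have := Real.sin_sq_add_cos_sq ζ.re
  nlinarith [Real.sinh_sq ζ.im]

lemma absSq_cos (ζ : ℂ) : (‖Complex.cos ζ‖)^2
    = Real.cos ζ.re^2 + Real.sinh ζ.im^2 := by
  rw [Complex.sq_norm, Complex.cos_eq]
  have h1 : Complex.sin ζ.re = (Real.sin ζ.re : ℂ) := (Complex.ofReal_sin _).symm
  have h2 : Complex.cos ζ.re = (Real.cos ζ.re : ℂ) := (Complex.ofReal_cos _).symm
  have h3 : Complex.cosh ζ.im = (Real.cosh ζ.im : ℂ) := (Complex.ofReal_cosh _).symm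
  have h4 : Complex.sinh ζ.im = (Real.sinh ζ.im : ℂ) := (Complex.ofReal_sinh _).symm
  rw [h1, h2, h3, h4]
  rw [show ((Real.cos ζ.re :ℂ) * (Real.cosh ζ.im:ℂ) - (Real.sin ζ.re:ℂ) * (Real.sinh ζ.im:ℂ) * Complex.I)
    = Complex.mk (Real.cos ζ.re * Real.cosh ζ.im) (-(Real.sin ζ.re * Real.sinh ζ.im)) by
      apply Complex.ext <;> simp [Complex.add_re, Complex.add_im, Complex.mul_re, Complex.mul_im, Complex.sub_re, Complex.sub_im, Complex.sin_ofReal_re, Complex.sin_ofReal_im, Complex.cos_ofReal_re, Complex.cos_ofReal_im, Complex.sinh_ofReal_re, Complex.sinh_ofReal_im, Complex.cosh_ofReal_re, Complex.cosh_ofReal_im]]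
  rw [Complex.normSq_mk]
  have := Real.cosh_sq ζ.im
  have := Real.sin_sq_add_cos_sq ζ.re
  nlinarith

lemma csqrt_sq (z : ℂ) : csqrt z ^ 2 = z := by
  by_cases h : z = 0
  · simp [csqrt, h, Complex.zero_cpow (by norm_num : (1:ℂ)/2 ≠ 0)]
  · rw [csqrt, sq, ← Complex.cpow_add _ _ h]
    norm_num

lemma csqrt_re_nonneg (z : ℂ) : 0 ≤ (csqrt z).re := by
  by_cases h : z = 0
  · simp [csqrt, h, Complex.zero_cpow (by norm_num : (1:ℂ)/2 ≠ 0)]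
  · rw [csqrt, Complex.cpow_def_of_ne_zero h, Complex.exp_re]
    apply mul_nonneg (Real.exp_pos _).le
    apply Real.cos_nonneg_of_mem_Icc
    have h1 : (Complex.log z * ((1:ℂ)/2)).im = z.arg / 2 := by
      simp [Complex.mul_im, Complex.log_im, Complex.log_re]
      ring
    rw [h1]
    constructor
    · nlinarith [Complex.neg_pi_lt_arg z, Real.pi_pos]
    · nlinarith [Complex.arg_le_pi z, Real.pi_pos]

lemma csqrt_neg (z : ℂ) : (csqrt (-z)).re = |(csqrt z).im| ∧ |(csqrt (-z)).im| = (csqrt z).re := by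
  by_cases h : z = 0
  · simp [csqrt, h, Complex.zero_cpow (by norm_num : (1:ℂ)/2 ≠ 0)]
  have h1 : csqrt z ^ 2 = z := csqrt_sq z
  have h2 : csqrt (-z) ^ 2 = -z := csqrt_sq (-z)
  have hr : 0 ≤ (csqrt z).re := csqrt_re_nonneg z
  have hr' : 0 ≤ (csqrt (-z)).re := csqrt_re_nonneg (-z)
  set w := csqrt z
  set w' := csqrt (-z)
  have key : (w' - Complex.I * w) * (w' + Complex.I * w) = 0 := by
    have : w' ^ 2 = - w ^ 2 := by rw [h1, h2]
    have hI : Complex.I ^ 2 = -1 := Complex.I_sq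
    linear_combination this - w^2 * hI
  rcases mul_eq_zero.1 key with hc | hc
  · have hw' : w' = Complex.I * w := by linear_combination hc
    have hre : w'.re = -w.im := by rw [hw']; simp
    have him : w'.im = w.re := by rw [hw']; simp
    have : w.im ≤ 0 := by rw [hre] at hr'; linarith
    constructor
    · rw [hre, abs_of_nonpos this]
    · rw [him, abs_of_nonneg hr]
  · have hw' : w' = -(Complex.I * w) := by linear_combination hc
    have hre : w'.re = w.im := by rw [hw']; simp
    have him : w'.im = -w.re := by rw [hw']; simp
    have : 0 ≤ w.im := by rw [hre] at hr'; linarith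
    constructor
    · rw [hre, abs_of_nonneg this]
    · rw [him, abs_of_nonpos (by linarith), neg_neg]

-- R1
lemma sinh_le_mul_exp {t : ℝ} (h : 0 ≤ t) : Real.sinh t ≤ t * Real.exp t := by
  rw [Real.sinh_eq]
  have h1 : 1 - 2*t ≤ Real.exp (-(2*t)) := by
    have := Real.one_sub_le_exp_neg (2*t)
    linarith
  have h2 : Real.exp (-t) = Real.exp t * Real.exp (-(2*t)) := by
    rw [← Real.exp_add]; ring_nf
  nlinarith [Real.exp_pos t, Real.exp_pos (-t)]

-- R2
lemma sinh_ge_exp {t : ℝ} (h : 2/5 ≤ t) : (1/6) * Real.exp (π/2*t) ≤ Real.sinh (π/2*t) := by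
  rw [Real.sinh_eq]
  set s := π/2*t with hs
  have hsp : 1/2 ≤ s := by
    have := Real.pi_gt_three
    nlinarith
  have h1 : Real.exp (-s) ≤ (2/3) * Real.exp s := by
    have h2 : (3:ℝ)/2 ≤ Real.exp (2*s) := by
      nlinarith [Real.add_one_le_exp (2*s)]
    have h3 : Real.exp (-s) * Real.exp (2*s) = Real.exp s := by
      rw [← Real.exp_add]; ring_nf
    nlinarith [Real.exp_pos (-s), Real.exp_pos s, Real.exp_pos (2*s)]
  linarith

-- R3
lemma exp_pi_fifth : Real.exp (π/5) ≤ 12/5 := by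
  have h1 : 1 - π/10 ≤ Real.exp (-(π/10)) := Real.one_sub_le_exp_neg _
  have h2 : Real.exp (π/10) * Real.exp (-(π/10)) = 1 := by
    rw [← Real.exp_add]; simp
  have hp : π ≤ 3.15 := by linarith [Real.pi_lt_d2]
  have hp2 : 3 < π := Real.pi_gt_three
  have h3 : Real.exp (π/10) ≤ 20/13 := by
    nlinarith [Real.exp_pos (π/10), Real.exp_pos (-(π/10))]
  have h4 : Real.exp (π/5) = Real.exp (π/10) * Real.exp (π/10) := by
    rw [← Real.exp_add]; ring_nf
  nlinarith [Real.exp_pos (π/10)]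

-- e^{1/8} ≤ 8/7
lemma exp_eighth : Real.exp ((1:ℝ)/8) ≤ 8/7 := by
  have h1 : 1 - 1/8 ≤ Real.exp (-(1/8 : ℝ)) := Real.one_sub_le_exp_neg _
  have h2 : Real.exp ((1:ℝ)/8) * Real.exp (-(1/8:ℝ)) = 1 := by
    rw [← Real.exp_add]; simp
  nlinarith [Real.exp_pos ((1:ℝ)/8), Real.exp_pos (-(1/8:ℝ))]

-- R4
lemma pow4_le_exp {t : ℝ} (h : 0 ≤ t) : t^4 ≤ 256 * Real.exp t := by
  have h1 : t/4 ≤ Real.exp (t/4) := by nlinarith [Real.add_one_le_exp (t/4)]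
  have h2 : (t/4)^4 ≤ (Real.exp (t/4))^4 := by
    apply pow_le_pow_left₀ (by positivity) h1
  have h3 : (Real.exp (t/4))^4 = Real.exp t := by
    rw [← Real.exp_nat_mul]; norm_num; ring_nf
  nlinarith

lemma pow5_le_exp {t : ℝ} (h : 0 ≤ t) : t^5 ≤ 3125 * Real.exp t := by
  have h1 : t/5 ≤ Real.exp (t/5) := by nlinarith [Real.add_one_le_exp (t/5)]
  have h2 : (t/5)^5 ≤ (Real.exp (t/5))^5 := by
    apply pow_le_pow_left₀ (by positivity) h1
  have h3 : (Real.exp (t/5))^5 = Real.exp t := by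
    rw [← Real.exp_nat_mul]; norm_num; ring_nf
  nlinarith

-- R5
lemma cos_sq_shift (k : ℕ) (b : ℝ) :
    Real.cos (b + (2*k+1) * (π/2)) ^ 2 = Real.sin b ^ 2 := by
  induction k generalizing b with
  | zero => norm_num [Real.cos_add_pi_div_two]
  | succ n ih =>
      have e : b + (2*(↑(n+1):ℝ)+1) * (π/2) = (b + π) + (2*(n:ℝ)+1) * (π/2) := by
        push_cast; ring
      push_cast at e ⊢
      rw [e, ih (b + π), Real.sin_add_pi]
      ring

-- R7
lemma sin_sq_shift (n : ℕ) (c : ℝ) : Real.sin (c + n * π) ^ 2 = Real.sin c ^ 2 := by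
  induction n generalizing c with
  | zero => norm_num
  | succ m ih =>
      have e : c + (↑(m+1):ℝ) * π = (c + π) + (m:ℝ) * π := by push_cast; ring
      push_cast at e ⊢
      rw [e, ih (c + π)]
      rw [Real.sin_add_pi]
      ring

lemma le_of_sq {a b : ℝ} (ha : 0 ≤ a) (hb : 0 ≤ b) (h : a^2 ≤ b^2) : a ≤ b := by nlinarith

lemma absSq_z (ζ : ℂ) : (‖ζ‖)^2 = ζ.re^2 + ζ.im^2 := by
  rw [Complex.sq_norm, Complex.normSq_apply]; ring

lemma sinh_abs_nonneg (t : ℝ) : 0 ≤ Real.sinh |t| :=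
  le_trans (abs_nonneg t) (Real.self_le_sinh_iff.2 (abs_nonneg t))

lemma sinh_abs_sq (t : ℝ) : Real.sinh |t| ^ 2 = Real.sinh t ^ 2 := by
  rw [← Real.abs_sinh, sq_abs]

-- C1
lemma abs_sin_le (ζ : ℂ) : ‖Complex.sin ζ‖ ≤ ‖ζ‖ * Real.exp |ζ.im| := by
  apply le_of_sq (by positivity) (by positivity)
  rw [absSq_sin, mul_pow, absSq_z]
  have h1 : Real.sin ζ.re ^ 2 ≤ ζ.re^2 := Real.sin_sq_le_sq
  have h2 : Real.sinh ζ.im ^2 ≤ ζ.im^2 * (Real.exp |ζ.im|)^2 := by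
    have := sinh_le_mul_exp (abs_nonneg ζ.im)
    rw [← sinh_abs_sq]
    nlinarith [sinh_abs_nonneg ζ.im, abs_nonneg ζ.im, Real.exp_pos |ζ.im|, sq_abs ζ.im]
  have h3 : (1:ℝ) ≤ (Real.exp |ζ.im|)^2 := by
    nlinarith [Real.one_le_exp (abs_nonneg ζ.im)]
  nlinarith [sq_nonneg ζ.re]

-- C3
lemma abs_sin_ge (ζ : ℂ) (hre : |ζ.re| ≤ π/2) :
    (2/π) * ‖ζ‖ ≤ ‖Complex.sin ζ‖ := by
  apply le_of_sq (by positivity) (by positivity)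
  rw [absSq_sin, mul_pow, absSq_z]
  have hpi := Real.pi_gt_three
  have h1 : (2/π)^2 * ζ.re^2 ≤ Real.sin ζ.re ^2 := by
    have := Real.mul_abs_le_abs_sin (x := ζ.re) hre
    nlinarith [abs_nonneg ζ.re, sq_abs ζ.re, sq_abs (Real.sin ζ.re),
      mul_nonneg (by positivity : (0:ℝ) ≤ 2/π) (abs_nonneg ζ.re)]
  have h2 : ζ.im^2 ≤ Real.sinh ζ.im^2 := by
    rcases le_or_gt 0 ζ.im with h | h
    · nlinarith [Real.self_le_sinh_iff.2 h]
    · have h' : Real.sinh (-ζ.im) ≥ -ζ.im := Real.self_le_sinh_iff.2 (by linarith)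
      rw [Real.sinh_neg] at h'
      nlinarith
  have h3 : (2/π)^2 ≤ 1 := by
    rw [div_pow]
    rw [div_le_one (by positivity)]
    nlinarith
  nlinarith [sq_nonneg ζ.im, sq_nonneg ζ.re]

-- C4
lemma sinh_le_abs_cos (ζ : ℂ) : Real.sinh |ζ.im| ≤ ‖Complex.cos ζ‖ := by
  apply le_of_sq (sinh_abs_nonneg _) (by positivity)
  rw [absSq_cos, sinh_abs_sq]
  nlinarith [sq_nonneg (Real.cos ζ.re)]

-- C4b
lemma cos_re_le_abs_cos (ζ : ℂ) : |Real.cos ζ.re| ≤ ‖Complex.cos ζ‖ := by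
  apply le_of_sq (abs_nonneg _) (by positivity)
  rw [absSq_cos]
  nlinarith [sq_nonneg (Real.sinh ζ.im), sq_abs (Real.cos ζ.re)]

-- C6
lemma abs_sin_le_exp (ζ : ℂ) : ‖Complex.sin ζ‖ ≤ Real.exp |ζ.im| := by
  apply le_of_sq (by positivity) (by positivity)
  rw [absSq_sin]
  have h1 : Real.sin ζ.re^2 ≤ 1 := by nlinarith [Real.abs_sin_le_one ζ.re, sq_abs (Real.sin ζ.re), abs_nonneg (Real.sin ζ.re)]
  have h2 : 1 + Real.sinh ζ.im^2 ≤ (Real.exp |ζ.im|)^2 := by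
    have hc : Real.cosh |ζ.im| ≤ Real.exp |ζ.im| := by
      rw [Real.cosh_eq]
      nlinarith [Real.exp_pos (-|ζ.im|), Real.exp_pos |ζ.im|,
        Real.exp_le_exp.2 (neg_abs_le ζ.im), Real.exp_le_exp.2 (le_abs_self ζ.im)]
    have := Real.cosh_sq |ζ.im|
    nlinarith [Real.cosh_pos (x := |ζ.im|), sinh_abs_sq ζ.im]
  linarith

lemma smul_re (r : ℝ) (ζ : ℂ) : ((r:ℂ) * ζ).re = r * ζ.re := by simp
lemma smul_im (r : ℝ) (ζ : ℂ) : ((r:ℂ) * ζ).im = r * ζ.im := by simp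

lemma good_cos (ζ : ℂ) (hre : 0 ≤ ζ.re)
    (h : ∀ m : ℕ, Odd m → 2/5 ≤ |ζ.re - m| ∨ 2/5 ≤ |ζ.im|) :
    (1/6) * Real.exp (π/2 * |ζ.im|) ≤ ‖Complex.cos ((π/2 : ℝ) * ζ)‖ := by
  have hpi := Real.pi_gt_three
  have hpi2 : π ≤ 3.15 := by linarith [Real.pi_lt_d2]
  rcases le_or_gt (2/5) |ζ.im| with hb | hb
  · calc (1/6) * Real.exp (π/2 * |ζ.im|) ≤ Real.sinh (π/2 * |ζ.im|) := sinh_ge_exp hb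
    _ = Real.sinh |((π/2 : ℝ) * ζ : ℂ).im| := by
        rw [smul_im, abs_mul, abs_of_pos (by positivity : (0:ℝ) < π/2)]
    _ ≤ _ := sinh_le_abs_cos _
  · set a := ζ.re with ha
    set k : ℕ := (⌊a/2⌋).toNat with hk
    have hk0 : (0:ℤ) ≤ ⌊a/2⌋ := Int.floor_nonneg.2 (by positivity)
    have hkz : ((k:ℕ):ℤ) = ⌊a/2⌋ := Int.toNat_of_nonneg hk0
    have hkr : ((k:ℕ):ℝ) = ((⌊a/2⌋:ℤ):ℝ) := by exact_mod_cast congrArg (Int.cast : ℤ → ℝ) hkz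
    have hfl : ((⌊a/2⌋:ℤ) : ℝ) ≤ a/2 := Int.floor_le _
    have hfl2 : a/2 < ((⌊a/2⌋:ℤ) : ℝ) + 1 := Int.lt_floor_add_one _
    set m : ℕ := 2*k+1 with hm
    have hodd : Odd m := ⟨k, by rw [hm]⟩
    have hmr : ((m:ℕ):ℝ) = 2*((k:ℕ):ℝ)+1 := by rw [hm]; push_cast; ring
    have hdist : |a - (m:ℝ)| ≤ 1 := by
      rw [abs_le, hmr, hkr]
      constructor <;> linarith
    have hdist2 : 2/5 ≤ |a - (m:ℝ)| := by
      rcases h m hodd with h' | h'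
      · exact h'
      · linarith
    -- lower bound on |cos((π/2) a)|
    have hcos : 2/5 ≤ |Real.cos (π/2 * a)| := by
      have hsq : Real.cos (π/2 * a)^2 = Real.sin (π/2 * (a - m))^2 := by
        rw [hmr]
        have hcs := cos_sq_shift k (π/2 * (a - (2*(k:ℝ)+1)))
        rw [← hcs]
        congr 1
        ring
      have hθ : |π/2 * (a - m)| ≤ π/2 := by
        rw [abs_mul, abs_of_pos (by positivity : (0:ℝ) < π/2)]
        nlinarith [hdist]
      have hsin := Real.mul_abs_le_abs_sin hθ
      have : 2/π * |π/2 * (a-m)| = |a - m| := by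
        rw [abs_mul, abs_of_pos (by positivity : (0:ℝ) < π/2)]
        field_simp
      rw [this] at hsin
      apply le_of_sq (by norm_num) (abs_nonneg _)
      calc (2/5:ℝ)^2 ≤ |a - (m:ℝ)|^2 := by nlinarith [abs_nonneg (a - (m:ℝ))]
        _ ≤ |Real.sin (π/2 * (a - m))|^2 := by nlinarith [abs_nonneg (Real.sin (π/2 * (a-m)))]
        _ = Real.sin (π/2 * (a - m))^2 := sq_abs _
        _ = Real.cos (π/2 * a)^2 := hsq.symm
        _ = |Real.cos (π/2 * a)|^2 := (sq_abs _).symm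
    have hexp : Real.exp (π/2 * |ζ.im|) ≤ 12/5 := by
      calc Real.exp (π/2 * |ζ.im|) ≤ Real.exp (π/5) := by
            apply Real.exp_le_exp.2; nlinarith [abs_nonneg ζ.im]
        _ ≤ 12/5 := exp_pi_fifth
    calc (1/6) * Real.exp (π/2 * |ζ.im|) ≤ (1/6) * (12/5) := by nlinarith [Real.exp_pos (π/2 * |ζ.im|)]
      _ ≤ |Real.cos (π/2 * a)| := by linarith
      _ = |Real.cos (((π/2:ℝ) * ζ : ℂ).re)| := by rw [smul_re]
      _ ≤ _ := cos_re_le_abs_cos _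

lemma bad_ratio (z w : ℂ) (m : ℕ) (hm : Odd m) (hw : w^2 = z)
    (h1 : |w.re - m| < 2/5) (h2 : |w.im| < 2/5) :
    ‖Complex.sin ((π:ℂ) * z)‖ ≤
      10 * m * Real.exp (π * |z.im|) * ‖Complex.cos ((π/2:ℝ) * w)‖ := by
  have hpi := Real.pi_gt_three
  have hpi2 : π ≤ 3.15 := by linarith [Real.pi_lt_d2]
  have hm1 : 1 ≤ m := hm.pos
  have hm1r : (1:ℝ) ≤ (m:ℝ) := by exact_mod_cast hm1
  -- casts
  have hmc : ((m:ℂ))^2 = (((m:ℝ)^2 : ℝ) : ℂ) := by norm_cast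
  -- Step 1 : |sin πz| = |sin π(z - m²)|
  have hsplit : (π:ℂ) * (z - (m:ℂ)^2) = (π:ℂ)*z - (((π*(m:ℝ)^2):ℝ):ℂ) := by
    push_cast; ring
  have hre2 : ((π:ℂ) * (z - (m:ℂ)^2)).re = π * (z.re - (m:ℝ)^2) := by
    rw [hsplit, Complex.sub_re, smul_re, Complex.ofReal_re]; ring
  have him2 : ((π:ℂ) * (z - (m:ℂ)^2)).im = π * z.im := by
    rw [hsplit, Complex.sub_im, smul_im, Complex.ofReal_im]; ring
  have e1 : ‖Complex.sin ((π:ℂ) * z)‖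
      = ‖Complex.sin ((π:ℂ) * (z - (m:ℂ)^2))‖ := by
    have q1 := absSq_sin ((π:ℂ) * z)
    have q2 := absSq_sin ((π:ℂ) * (z - (m:ℂ)^2))
    rw [smul_re, smul_im] at q1
    rw [hre2, him2] at q2
    have hshift : Real.sin (π * z.re)^2 = Real.sin (π * (z.re - (m:ℝ)^2))^2 := by
      have := sin_sq_shift (m^2) (π * (z.re - (m:ℝ)^2))
      rw [show π * (z.re - (m:ℝ)^2) + ((m^2 : ℕ):ℝ) * π = π * z.re by push_cast; ring] at this
      rw [this]
    have heq : (‖Complex.sin ((π:ℂ) * z)‖)^2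
        = (‖Complex.sin ((π:ℂ) * (z - (m:ℂ)^2))‖)^2 := by
      rw [q1, q2, hshift]
    exact le_antisymm (le_of_sq (by positivity) (by positivity) heq.le)
      (le_of_sq (by positivity) (by positivity) heq.ge)
  -- Step 2 : upper bound
  have e2 : ‖Complex.sin ((π:ℂ) * (z - (m:ℂ)^2))‖
      ≤ π * (‖w - m‖ * ‖w + m‖) * Real.exp (π * |z.im|) := by
    have := abs_sin_le ((π:ℂ) * (z - (m:ℂ)^2))
    have habs : ‖(π:ℂ) * (z - (m:ℂ)^2)‖
        = π * (‖w - m‖ * ‖w + m‖) := by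
      rw [show (z - (m:ℂ)^2) = (w - m) * (w + m) by rw [← hw]; ring]
      rw [norm_mul, norm_mul, Complex.norm_real, Real.norm_eq_abs, abs_of_pos (by positivity : (0:ℝ) < π)]
    have him : |((π:ℂ) * (z - (m:ℂ)^2)).im| = π * |z.im| := by
      rw [him2, abs_mul, abs_of_pos (by positivity : (0:ℝ) < π)]
    rw [habs, him] at this
    exact this
  -- Step 3 : |cos((π/2)w)| = |sin((π/2)(w-m))| ≥ |w - m|
  have e3 : ‖w - (m:ℂ)‖ ≤ ‖Complex.cos ((π/2:ℝ) * w)‖ := by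
    obtain ⟨k, hk⟩ := hm
    have hmr : ((m:ℕ):ℝ) = 2*(k:ℝ)+1 := by rw [hk]; push_cast; ring
    have hre3 : (((π/2:ℝ):ℂ) * (w - (m:ℂ))).re = π/2 * (w.re - (m:ℝ)) := by
      rw [smul_re]
      simp [Complex.sub_re]
    have him3 : (((π/2:ℝ):ℂ) * (w - (m:ℂ))).im = π/2 * w.im := by
      rw [smul_im]
      simp [Complex.sub_im]
    have hcs : Real.cos (π/2 * w.re)^2 = Real.sin (π/2 * (w.re - (m:ℝ)))^2 := by
      rw [hmr]
      have hcs2 := cos_sq_shift k (π/2 * (w.re - (2*(k:ℝ)+1)))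
      rw [← hcs2]
      congr 1
      ring
    have heqc : ‖Complex.cos ((π/2:ℝ) * w)‖
        = ‖Complex.sin (((π/2:ℝ):ℂ) * (w - (m:ℂ)))‖ := by
      have q1 := absSq_cos (((π/2:ℝ):ℂ) * w)
      have q2 := absSq_sin (((π/2:ℝ):ℂ) * (w - (m:ℂ)))
      rw [smul_re, smul_im] at q1
      rw [hre3, him3] at q2
      have heq : (‖Complex.cos ((π/2:ℝ) * w)‖)^2
          = (‖Complex.sin (((π/2:ℝ):ℂ) * (w - (m:ℂ)))‖)^2 := by
        rw [q1, q2, hcs]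
      exact le_antisymm (le_of_sq (by positivity) (by positivity) heq.le)
        (le_of_sq (by positivity) (by positivity) heq.ge)
    have hge := abs_sin_ge (((π/2:ℝ):ℂ) * (w - (m:ℂ))) (by
      rw [hre3, abs_mul, abs_of_pos (by positivity : (0:ℝ) < π/2)]
      nlinarith [h1.le])
    have habs : ‖((π/2:ℝ):ℂ) * (w - (m:ℂ))‖ = π/2 * ‖w - (m:ℂ)‖ := by
      rw [norm_mul, Complex.norm_real, Real.norm_eq_abs, abs_of_pos (by positivity : (0:ℝ) < π/2)]
    rw [habs] at hge
    have : 2/π * (π/2 * ‖w - (m:ℂ)‖) = ‖w - (m:ℂ)‖ := by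
      field_simp
    rw [this] at hge
    rw [heqc]
    exact hge
  -- Step 4 : |w + m| ≤ 2m + 1
  have e4 : ‖w + (m:ℂ)‖ ≤ 2*(m:ℝ) + 1 := by
    have hwm : ‖w - (m:ℂ)‖ ≤ 1 := by
      apply le_of_sq (by positivity) (by norm_num)
      rw [absSq_z]
      simp only [Complex.sub_re, Complex.sub_im, Complex.natCast_re, Complex.natCast_im, sub_zero]
      nlinarith [sq_abs (w.re - (m:ℝ)), sq_abs w.im, abs_nonneg (w.re - (m:ℝ)),
        abs_nonneg w.im, h1, h2]
    calc ‖w + (m:ℂ)‖ = ‖(w - (m:ℂ)) + 2*(m:ℂ)‖ := by ring_nf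
      _ ≤ ‖w - (m:ℂ)‖ + ‖2*(m:ℂ)‖ := norm_add_le _ _
      _ ≤ 1 + 2*(m:ℝ) := by
          have : ‖2*(m:ℂ)‖ = 2*(m:ℝ) := by
            rw [norm_mul]
            simp
          rw [this]
          linarith [hwm]
      _ = 2*(m:ℝ) + 1 := by ring
  -- assemble
  have E0 : (0:ℝ) < Real.exp (π * |z.im|) := Real.exp_pos _
  calc ‖Complex.sin ((π:ℂ) * z)‖
      ≤ π * (‖w - m‖ * ‖w + m‖) * Real.exp (π * |z.im|) := by
        rw [e1]; exact e2
    _ = (π * Real.exp (π * |z.im|) * ‖w - (m:ℂ)‖) * ‖w + (m:ℂ)‖ := by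
        ring
    _ ≤ (π * Real.exp (π * |z.im|) * ‖w - (m:ℂ)‖) * (2*(m:ℝ)+1) :=
        mul_le_mul_of_nonneg_left e4 (by positivity)
    _ = (π * (2*(m:ℝ)+1) * Real.exp (π * |z.im|)) * ‖w - (m:ℂ)‖ := by ring
    _ ≤ (π * (2*(m:ℝ)+1) * Real.exp (π * |z.im|)) * ‖Complex.cos ((π/2:ℝ) * w)‖ :=
        mul_le_mul_of_nonneg_left e3 (by positivity)
    _ = (π * (2*(m:ℝ)+1)) * (Real.exp (π * |z.im|) * ‖Complex.cos ((π/2:ℝ) * w)‖) := by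
        ring
    _ ≤ (10 * (m:ℝ)) * (Real.exp (π * |z.im|) * ‖Complex.cos ((π/2:ℝ) * w)‖) := by
        apply mul_le_mul_of_nonneg_right _ (by positivity)
        nlinarith
    _ = 10 * m * Real.exp (π * |z.im|) * ‖Complex.cos ((π/2:ℝ) * w)‖ := by ring

lemma div_bound {a s f g K G : ℝ} (ha : 0 ≤ a) (hs : 0 ≤ s) (hf : 0 ≤ f) (hK : 0 ≤ K)
    (hG : 0 < G) (h1 : s ≤ K * f) (h2 : G ≤ g) : a * s / (f * g) ≤ a * K / G := by
  rcases eq_or_lt_of_le hf with h | h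
  · have hs0 : s = 0 := le_antisymm (by nlinarith) hs
    rw [hs0, ← h]
    simp
    positivity
  · have hg : 0 < g := lt_of_lt_of_le hG h2
    rw [div_le_div_iff₀ (by positivity) hG]
    have t1 : a*s*G ≤ a*(K*f)*G := by
      apply mul_le_mul_of_nonneg_right _ hG.le
      exact mul_le_mul_of_nonneg_left h1 ha
    have t2 : a*(K*f)*G ≤ a*(K*f)*g :=
      mul_le_mul_of_nonneg_left h2 (by positivity)
    calc a*s*G ≤ a*(K*f)*g := le_trans t1 t2
      _ = a*K*(f*g) := by ring

lemma max_exp_identity (y : ℝ) : -(π*y) + π*|y| = 2*π*max (-y) 0 := by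
  rcases le_or_gt 0 y with h | h
  · rw [abs_of_nonneg h, max_eq_right (by linarith)]
    ring
  · rw [abs_of_neg h, max_eq_left (by linarith)]
    ring

lemma badcase_numeric (mr x y : ℝ) (hm : 1 ≤ mr) (hy : |y| ≤ 2*mr) (hx : |x| ≤ 2*mr^2) :
    Real.exp (-(π*y)) * (10*mr*Real.exp (π*|y|)) / ((1/6)*Real.exp (π/2*(mr - 2/5)))
      ≤ 10^7 * Real.exp (2*π*max (-y) 0) * Real.exp (-(1/8) * Real.sqrt |y|) / (1 + x^2) := by
  have hpi := Real.pi_gt_three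
  have hpi2 : π ≤ 3.15 := by linarith [Real.pi_lt_d2]
  have hx2 : 1 + x^2 ≤ 5*mr^4 := by
    have h1 : x^2 ≤ 4*mr^4 := by nlinarith [sq_abs x, abs_nonneg x]
    nlinarith [sq_nonneg (mr^2 - 1), sq_nonneg (mr - 1)]
  have hsy : Real.sqrt |y| ≤ mr + 1 := by
    calc Real.sqrt |y| ≤ Real.sqrt ((mr+1)^2) := Real.sqrt_le_sqrt (by nlinarith)
      _ = mr + 1 := Real.sqrt_sq (by linarith)
  have hsy0 : 0 ≤ Real.sqrt |y| := Real.sqrt_nonneg _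
  rw [div_le_div_iff₀ (by positivity) (by positivity)]
  -- LHS : exp(-πy) * (10 mr exp(π|y|)) * (1+x²) ≤ 10^7 exp(M) exp(-√/8) * ((1/6) exp(π/2(mr-2/5)))
  have key : 10*mr*(1+x^2) ≤ (10^7/6) * Real.exp (π/2*(mr-2/5) - (1/8)*Real.sqrt |y|) := by
    have hT : mr - 1/3 ≤ π/2*(mr-2/5) - (1/8)*Real.sqrt |y| := by
      have hpi3 : (3.141592:ℝ) < π := Real.pi_gt_d6
      have hmr0 : (0:ℝ) < mr := by linarith
      nlinarith [hsy, mul_lt_mul_of_pos_right hpi3 hmr0]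
    have hexpT : Real.exp (mr - 1/3) ≤ Real.exp (π/2*(mr-2/5) - (1/8)*Real.sqrt |y|) :=
      Real.exp_le_exp.2 hT
    have hsplit : Real.exp (mr - 1/3) = Real.exp mr * Real.exp (-(1/3)) := by
      rw [← Real.exp_add]; ring_nf
    have hthird : (2/3 : ℝ) ≤ Real.exp (-(1/3)) := by
      have := Real.one_sub_le_exp_neg (1/3 : ℝ)
      linarith
    have hm5 : mr^5 ≤ 3125 * Real.exp mr := pow5_le_exp (by linarith)
    have h10 : 10*mr*(1+x^2) ≤ 50*mr^5 := by nlinarith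
    have : 50*mr^5 ≤ (10^7/6) * (Real.exp mr * (2/3)) := by
      nlinarith [Real.exp_pos mr]
    calc 10*mr*(1+x^2) ≤ 50*mr^5 := h10
      _ ≤ (10^7/6) * (Real.exp mr * (2/3)) := this
      _ ≤ (10^7/6) * (Real.exp mr * Real.exp (-(1/3))) := by
          nlinarith [Real.exp_pos mr]
      _ = (10^7/6) * Real.exp (mr - 1/3) := by rw [hsplit]
      _ ≤ _ := by nlinarith [hexpT]
  -- combine with exp(M)
  have hM : Real.exp (-(π*y)) * Real.exp (π*|y|) = Real.exp (2*π*max (-y) 0) := by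
    rw [← Real.exp_add, max_exp_identity]
  have hMpos : (0:ℝ) < Real.exp (2*π*max (-y) 0) := Real.exp_pos _
  have expand : Real.exp (π/2*(mr-2/5) - (1/8)*Real.sqrt |y|)
      = Real.exp (-(1/8) * Real.sqrt |y|) * Real.exp (π/2*(mr-2/5)) := by
    rw [← Real.exp_add]; ring_nf
  calc Real.exp (-(π*y)) * (10*mr*Real.exp (π*|y|)) * (1 + x^2)
      = (10*mr*(1+x^2)) * (Real.exp (-(π*y)) * Real.exp (π*|y|)) := by ring
    _ = (10*mr*(1+x^2)) * Real.exp (2*π*max (-y) 0) := by rw [hM]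
    _ ≤ ((10^7/6) * Real.exp (π/2*(mr-2/5) - (1/8)*Real.sqrt |y|)) * Real.exp (2*π*max (-y) 0) :=
        mul_le_mul_of_nonneg_right key hMpos.le
    _ = 10^7 * Real.exp (2*π*max (-y) 0) * Real.exp (-(1/8) * Real.sqrt |y|) *
          ((1/6)*Real.exp (π/2*(mr-2/5))) := by
        rw [expand]; ring

lemma goodcase_numeric (x y u av : ℝ) (hu : 0 ≤ u) (hav : 0 ≤ av)
    (hx : Real.sqrt |x| ≤ u + av) (hy : Real.sqrt |y| ≤ u + av) :
    Real.exp (-(π*y)) * Real.exp (π*|y|) / ((1/6)*Real.exp (π/2*av) * ((1/6)*Real.exp (π/2*u)))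
      ≤ 10^7 * Real.exp (2*π*max (-y) 0) * Real.exp (-(1/8) * Real.sqrt |y|) / (1 + x^2) := by
  have hpi := Real.pi_gt_three
  have hpi2 : π ≤ 3.15 := by linarith [Real.pi_lt_d2]
  set t := Real.sqrt |x| with ht
  have ht0 : 0 ≤ t := Real.sqrt_nonneg _
  have hsy0 : 0 ≤ Real.sqrt |y| := Real.sqrt_nonneg _
  set s := π/4 * t with hs
  have hs0 : 0 ≤ s := by positivity
  have ht4 : x^2 = t^4 := by
    rw [ht, show (Real.sqrt |x|)^4 = ((Real.sqrt |x|)^2)^2 by ring,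
      Real.sq_sqrt (abs_nonneg x), sq_abs]
  have hx2 : 1 + x^2 ≤ 811 * Real.exp s := by
    have hts : (3/4)*t ≤ s := by nlinarith
    have h44 : ((3/4)*t)^4 ≤ s^4 := pow_le_pow_left₀ (by positivity) hts 4
    have h4 := pow4_le_exp hs0
    have h1e := Real.one_le_exp hs0
    nlinarith
  set E := π/2*av + π/2*u - (1/8)*Real.sqrt |y| with hE
  have hsE : s ≤ E := by
    have h1 : t ≤ u + av := hx
    have h2 : Real.sqrt |y| ≤ u + av := hy
    rw [hs, hE]
    have k1 : π/4 * t ≤ π/4 * (u + av) := by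
      apply mul_le_mul_of_nonneg_left h1
      positivity
    have k2 : (1/8) * Real.sqrt |y| ≤ (1/8) * (u + av) := by
      apply mul_le_mul_of_nonneg_left h2
      norm_num
    have k3 : 0 ≤ (π/4 - 1/8) * (u + av) := by
      apply mul_nonneg _ (by linarith)
      nlinarith
    nlinarith [k1, k2, k3]
  have hmain : 1 + x^2 ≤ (10^7/36 : ℝ) * Real.exp E := by
    calc 1 + x^2 ≤ 811 * Real.exp s := hx2
      _ ≤ 811 * Real.exp E := by nlinarith [Real.exp_le_exp.2 hsE, Real.exp_pos s]
      _ ≤ (10^7/36 : ℝ) * Real.exp E := by nlinarith [Real.exp_pos E]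
  rw [div_le_div_iff₀ (by positivity) (by positivity)]
  have hM : Real.exp (-(π*y)) * Real.exp (π*|y|) = Real.exp (2*π*max (-y) 0) := by
    rw [← Real.exp_add, max_exp_identity]
  have hsplit : Real.exp (-(1/8) * Real.sqrt |y|) * ((1/6)*Real.exp (π/2*av) * ((1/6)*Real.exp (π/2*u)))
      = (1/36) * Real.exp E := by
    rw [hE, show π/2*av + π/2*u - (1/8)*Real.sqrt |y|
      = -(1/8) * Real.sqrt |y| + (π/2*av + π/2*u) by ring, Real.exp_add, Real.exp_add]
    ring
  calc Real.exp (-(π*y)) * Real.exp (π*|y|) * (1 + x^2)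
      = (1 + x^2) * (Real.exp (-(π*y)) * Real.exp (π*|y|)) := by ring
    _ = (1 + x^2) * Real.exp (2*π*max (-y) 0) := by rw [hM]
    _ ≤ ((10^7/36 : ℝ) * Real.exp E) * Real.exp (2*π*max (-y) 0) :=
        mul_le_mul_of_nonneg_right hmain (Real.exp_pos _).le
    _ = 10^7 * Real.exp (2*π*max (-y) 0) * Real.exp (-(1/8) * Real.sqrt |y|) *
          ((1/6)*Real.exp (π/2*av) * ((1/6)*Real.exp (π/2*u))) := by
        rw [show 10^7 * Real.exp (2*π*max (-y) 0) * Real.exp (-(1/8) * Real.sqrt |y|) *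
          ((1/6)*Real.exp (π/2*av) * ((1/6)*Real.exp (π/2*u)))
          = 10^7 * Real.exp (2*π*max (-y) 0) *
            (Real.exp (-(1/8) * Real.sqrt |y|) * ((1/6)*Real.exp (π/2*av) * ((1/6)*Real.exp (π/2*u)))) by ring,
          hsplit]
        ring

set_option maxHeartbeats 1000000 in
lemma key (x y : ℝ) :
    ‖hFun ((x:ℂ) + (y:ℂ) * Complex.I)‖ ≤
      10^7 * Real.exp (2*π*max (-y) 0) * Real.exp (-(1/8) * Real.sqrt |y|) / (1 + x^2) := by
  have hpi := Real.pi_gt_three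
  have hpi2 : π ≤ 3.15 := by linarith [Real.pi_lt_d2]
  set z := (x:ℂ) + (y:ℂ) * Complex.I with hz
  have hre : z.re = x := by simp [hz]
  have him : z.im = y := by simp [hz]
  set w := csqrt z with hwdef
  set w' := csqrt (-z) with hwdef'
  have hw2 : w^2 = z := csqrt_sq z
  have hw2' : w'^2 = -z := csqrt_sq (-z)
  have hu : 0 ≤ w.re := csqrt_re_nonneg z
  have hu' : 0 ≤ w'.re := csqrt_re_nonneg (-z)
  obtain ⟨hn1, hn2⟩ := csqrt_neg z
  rw [← hwdef', ← hwdef] at hn1 hn2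
  -- hn1 : w'.re = |w.im|, hn2 : |w'.im| = w.re
  set u := w.re with hudef
  set v := w.im with hvdef
  have hxuv : u^2 - v^2 = x := by
    have : (w^2).re = z.re := by rw [hw2]
    rw [sq, Complex.mul_re] at this
    rw [hre] at this
    nlinarith [this]
  have hyuv : 2*(u*v) = y := by
    have : (w^2).im = z.im := by rw [hw2]
    rw [sq, Complex.mul_im] at this
    rw [him] at this
    nlinarith [this]
  have habsz : u^2 + v^2 = ‖z‖ := by
    have h1 : (‖w‖)^2 = ‖w^2‖ := by
      rw [norm_pow]
    rw [hw2] at h1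
    rw [← h1, absSq_z]
  -- modulus of hFun
  have hE : ‖Complex.exp (Complex.I * Real.pi * z)‖ = Real.exp (-(π*y)) := by
    rw [Complex.norm_exp]
    congr 1
    have : (Complex.I * (Real.pi:ℂ) * z).re = -(π * z.im) := by
      simp [Complex.mul_re, Complex.mul_im]
    rw [this, him]
  have habsH : ‖hFun z‖
      = Real.exp (-(π*y)) * ‖Complex.sin ((π:ℂ) * z)‖ /
        (‖Complex.cos ((π/2:ℝ) * w)‖ * ‖Complex.cos ((π/2:ℝ) * w')‖) := by
    unfold hFun
    rw [norm_div, norm_mul, norm_mul, hE]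
  rw [habsH]
  set absS := ‖Complex.sin ((π:ℂ) * z)‖ with hSdef
  set absF := ‖Complex.cos ((π/2:ℝ) * w)‖ with hFdef
  set absG := ‖Complex.cos ((π/2:ℝ) * w')‖ with hGdef
  clear_value absS absF absG
  clear_value z w w'
  clear_value u v
  have hS0 : 0 ≤ absS := hSdef ▸ norm_nonneg _
  have hF0 : 0 ≤ absF := hFdef ▸ norm_nonneg _
  have hG0 : 0 ≤ absG := hGdef ▸ norm_nonneg _
  by_cases hA : ∃ m : ℕ, Odd m ∧ |w.re - (m:ℝ)| < 2/5 ∧ |w.im| < 2/5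
  · -- bad case A
    obtain ⟨m, hodd, h1, h2⟩ := hA
    have hm1r : (1:ℝ) ≤ (m:ℝ) := by exact_mod_cast hodd.pos
    have hSF : absS ≤ (10 * m * Real.exp (π * |y|)) * absF := by
      have := bad_ratio z w m hodd hw2 h1 h2
      rw [him] at this
      rw [hSdef, hFdef]
      calc ‖Complex.sin ((π:ℂ) * z)‖
          ≤ 10 * m * Real.exp (π * |y|) * ‖Complex.cos ((π/2:ℝ) * w)‖ := this
        _ = (10 * m * Real.exp (π * |y|)) * ‖Complex.cos ((π/2:ℝ) * w)‖ := by ring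
    have hG : (1/6) * Real.exp (π/2*((m:ℝ) - 2/5)) ≤ absG := by
      have h3 : (m:ℝ) - 2/5 ≤ |w'.im| := by
        rw [hn2]
        have := (abs_lt.1 h1).1
        linarith
      calc (1/6) * Real.exp (π/2*((m:ℝ) - 2/5)) ≤ Real.sinh (π/2*((m:ℝ) - 2/5)) :=
            sinh_ge_exp (by linarith)
        _ ≤ Real.sinh (π/2 * |w'.im|) := Real.sinh_le_sinh.2 (by nlinarith [abs_nonneg w'.im])
        _ = Real.sinh |((π/2:ℝ) * w' : ℂ).im| := by
            rw [smul_im, abs_mul, abs_of_pos (by positivity : (0:ℝ) < π/2)]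
        _ ≤ absG := by rw [hGdef]; exact sinh_le_abs_cos _
    have hdiv := div_bound (Real.exp_pos (-(π*y))).le hS0 hF0 (by positivity)
      (by positivity) hSF hG
    -- region bounds
    have hv2 : |v| < 2/5 := by rw [hvdef]; exact h2
    have huu : u < (m:ℝ) + 2/5 := by rw [hudef]; have := (abs_lt.1 h1).2; linarith
    have hyr : |y| ≤ 2*(m:ℝ) := by
      rw [← hyuv, abs_mul, abs_mul, abs_of_nonneg (by norm_num : (0:ℝ) ≤ 2),
        abs_of_nonneg hu]
      nlinarith [abs_nonneg v]
    have hxr : |x| ≤ 2*(m:ℝ)^2 := by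
      rw [← hxuv, abs_le]
      constructor
      · nlinarith [sq_abs v, abs_nonneg v, sq_nonneg u]
      · nlinarith [sq_abs v, abs_nonneg v, sq_nonneg v]
    calc Real.exp (-(π*y)) * absS / (absF * absG)
        ≤ Real.exp (-(π*y)) * (10*(m:ℝ)*Real.exp (π*|y|)) / ((1/6)*Real.exp (π/2*((m:ℝ) - 2/5))) :=
          hdiv
      _ ≤ _ := badcase_numeric (m:ℝ) x y hm1r hyr hxr
  · by_cases hB : ∃ m : ℕ, Odd m ∧ |w'.re - (m:ℝ)| < 2/5 ∧ |w'.im| < 2/5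
    · -- bad case B
      obtain ⟨m, hodd, h1, h2⟩ := hB
      have hm1r : (1:ℝ) ≤ (m:ℝ) := by exact_mod_cast hodd.pos
      have hSG : absS ≤ (10 * m * Real.exp (π * |y|)) * absG := by
        have hbr := bad_ratio (-z) w' m hodd hw2' h1 h2
        have hnegim : (-z).im = -y := by rw [Complex.neg_im, him]
        rw [hnegim, abs_neg, ← hGdef] at hbr
        have hsin : ‖Complex.sin ((π:ℂ) * -z)‖ = absS := by
          rw [show (π:ℂ) * -z = -((π:ℂ) * z) by ring, Complex.sin_neg, norm_neg]
          exact hSdef.symm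
        rw [hsin] at hbr
        calc absS ≤ 10 * m * Real.exp (π * |y|) * absG := hbr
          _ = (10 * m * Real.exp (π * |y|)) * absG := by ring
      have hF : (1/6) * Real.exp (π/2*((m:ℝ) - 2/5)) ≤ absF := by
        have h3 : (m:ℝ) - 2/5 ≤ |v| := by
          rw [← hn1]
          have := (abs_lt.1 h1).1
          linarith
        calc (1/6) * Real.exp (π/2*((m:ℝ) - 2/5)) ≤ Real.sinh (π/2*((m:ℝ) - 2/5)) :=
              sinh_ge_exp (by linarith)
          _ ≤ Real.sinh (π/2 * |v|) := Real.sinh_le_sinh.2 (by nlinarith [abs_nonneg v])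
          _ = Real.sinh |((π/2:ℝ) * w : ℂ).im| := by
              rw [smul_im, abs_mul, abs_of_pos (by positivity : (0:ℝ) < π/2), hvdef]
          _ ≤ absF := by rw [hFdef]; exact sinh_le_abs_cos _
      have hdiv : Real.exp (-(π*y)) * absS / (absF * absG)
          ≤ Real.exp (-(π*y)) * (10*(m:ℝ)*Real.exp (π*|y|)) / ((1/6)*Real.exp (π/2*((m:ℝ) - 2/5))) := by
        rw [mul_comm absF absG]
        exact div_bound (Real.exp_pos (-(π*y))).le hS0 hG0 (by positivity)
          (by positivity) hSG hF
      -- region bounds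
      have hvm : |v| < (m:ℝ) + 2/5 := by
        rw [← hn1]
        have := (abs_lt.1 h1).2
        linarith
      have hu2 : u < 2/5 := by rw [← hn2]; exact h2
      have hyr : |y| ≤ 2*(m:ℝ) := by
        rw [← hyuv, abs_mul, abs_mul, abs_of_nonneg (by norm_num : (0:ℝ) ≤ 2),
          abs_of_nonneg hu]
        nlinarith [abs_nonneg v, abs_nonneg (w'.re)]
      have hxr : |x| ≤ 2*(m:ℝ)^2 := by
        rw [← hxuv, abs_le]
        constructor
        · nlinarith [sq_abs v, abs_nonneg v, sq_nonneg u]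
        · nlinarith [sq_abs v, abs_nonneg v, sq_abs u]
      calc Real.exp (-(π*y)) * absS / (absF * absG)
          ≤ Real.exp (-(π*y)) * (10*(m:ℝ)*Real.exp (π*|y|)) / ((1/6)*Real.exp (π/2*((m:ℝ) - 2/5))) :=
            hdiv
        _ ≤ _ := badcase_numeric (m:ℝ) x y hm1r hyr hxr
    · -- good case
      push_neg at hA hB
      have hgF : (1/6) * Real.exp (π/2 * |v|) ≤ absF := by
        rw [hFdef, hvdef]
        apply good_cos w (hudef ▸ hu)
        intro m hm
        rcases le_or_gt (2/5) |w.re - (m:ℝ)| with h | h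
        · exact Or.inl h
        · exact Or.inr (hA m hm h)
      have hgG : (1/6) * Real.exp (π/2 * u) ≤ absG := by
        have := good_cos w' hu' (by
          intro m hm
          rcases le_or_gt (2/5) |w'.re - (m:ℝ)| with h | h
          · exact Or.inl h
          · exact Or.inr (hB m hm h))
        rw [hn2] at this
        rw [hGdef]
        exact this
      have hS : absS ≤ Real.exp (π * |y|) := by
        rw [hSdef]
        have := abs_sin_le_exp ((π:ℂ) * z)
        rw [smul_im, him] at this
        rw [abs_mul, abs_of_pos (by positivity : (0:ℝ) < π)] at this
        exact this
      have hdiv : Real.exp (-(π*y)) * absS / (absF * absG)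
          ≤ Real.exp (-(π*y)) * Real.exp (π*|y|) /
            ((1/6)*Real.exp (π/2*|v|) * ((1/6)*Real.exp (π/2*u))) := by
        apply div_le_div₀ (by positivity)
          (mul_le_mul_of_nonneg_left hS (Real.exp_pos _).le)
          (by positivity)
          (mul_le_mul hgF hgG (by positivity) hF0)
      -- geometry
      have hsum : Real.sqrt |x| ≤ |v| + u ∧ Real.sqrt |y| ≤ |v| + u := by
        have hzx : |x| ≤ ‖z‖ := by
          rw [← hre]; exact Complex.abs_re_le_norm z
        have hzy : |y| ≤ ‖z‖ := by
          rw [← him]; exact Complex.abs_im_le_norm z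
        have hsq : ‖z‖ ≤ (|v| + u)^2 := by
          rw [← habsz]
          nlinarith [mul_nonneg (abs_nonneg v) hu, sq_abs v]
        constructor
        · calc Real.sqrt |x| ≤ Real.sqrt ((|v| + u)^2) := Real.sqrt_le_sqrt (by linarith)
            _ = |v| + u := Real.sqrt_sq (by positivity)
        · calc Real.sqrt |y| ≤ Real.sqrt ((|v| + u)^2) := Real.sqrt_le_sqrt (by linarith)
            _ = |v| + u := Real.sqrt_sq (by positivity)
      calc Real.exp (-(π*y)) * absS / (absF * absG)
          ≤ Real.exp (-(π*y)) * Real.exp (π*|y|) /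
            ((1/6)*Real.exp (π/2*|v|) * ((1/6)*Real.exp (π/2*u))) := hdiv
        _ ≤ _ := goodcase_numeric x y u |v| hu (abs_nonneg v) (by rw [add_comm]; exact hsum.1) (by rw [add_comm]; exact hsum.2)

/-- **Lemma 7 (growth estimates).** `|h(x+iy)| ≤ C₁ e^{-C₂√y}/(1+x²)` for `y ≥ 0`, and
`|h(x+iy)| ≤ C₁ e^{2π|y| - C₂√|y|}/(1+x²)` for `y < 0`. -/
theorem hFun_estimates :
    ∃ C₁ C₂ : ℝ, 0 < C₁ ∧ 0 < C₂ ∧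
      (∀ x y : ℝ, 0 ≤ y →
        ‖hFun (x + y * Complex.I)‖ ≤
          C₁ * Real.exp (-C₂ * Real.sqrt y) / (1 + x ^ 2)) ∧
      (∀ x y : ℝ, y < 0 →
        ‖hFun (x + y * Complex.I)‖ ≤
          C₁ * Real.exp (2 * Real.pi * |y| - C₂ * Real.sqrt |y|) / (1 + x ^ 2)) := by
  refine ⟨10^7, 1/8, by norm_num, by norm_num, ?_, ?_⟩
  · intro x y hy
    have h := key x y
    rw [max_eq_right (by linarith : -y ≤ 0), mul_zero, Real.exp_zero, mul_one,
      abs_of_nonneg hy] at h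
    calc ‖hFun (x + y * Complex.I)‖
        ≤ 10^7 * Real.exp (-(1/8) * Real.sqrt y) / (1 + x^2) := h
      _ = 10^7 * Real.exp (-(1/8) * Real.sqrt y) / (1 + x^2) := rfl
  · intro x y hy
    have h := key x y
    rw [show max (-y) 0 = |y| by rw [abs_of_neg hy]; exact max_eq_left (by linarith),
      mul_assoc, ← Real.exp_add,
      show 2*π*|y| + -(1/8)*Real.sqrt |y| = 2*π*|y| - 1/8*Real.sqrt |y| by ring] at h
    exact h
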